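/- (Structural bound, q = 1 version for sampled Gram matrices.) Let C ∈ ℝ^{I×T}, let Q ∈ ℝ^{I×μ} have orthonormal columns, let R ∈ ℝ^{μ×(μ+K)}, F ∈ ℝ^{(μ+K)×I}, and G ∈ ℝ^{I×(μ+K)}. Then ‖C C^T − Q Q^T C C^T‖_F^2 ≤ 2 ‖C C^T G F − C C^T‖_F^2 + 2 ‖F‖_2^2 · ‖Q R − C C^T G‖_F^2. -/
import Mathlib


open Matrix

noncomputable section

/-- Frobenius norm of a real matrix. -/
def frob {m n : Type*} [Fintype m] [Fintype n] (A : Matrix m n ℝ) : ℝ :=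
  Real.sqrt (∑ i, ∑ j, (A i j) ^ 2)

/-- Spectral norm of a real matrix. -/
def spec {m n : Type*} [Fintype m] [Fintype n] [DecidableEq n] (A : Matrix m n ℝ) : ℝ :=
  ‖LinearMap.toContinuousLinearMap (Matrix.toEuclideanLin A)‖

namespace FrobAux

/-- Squared Frobenius norm. -/
def frobSq {m n : Type*} [Fintype m] [Fintype n] (A : Matrix m n ℝ) : ℝ :=
  ∑ i, ∑ j, (A i j) ^ 2

lemma frobSq_nonneg {m n : Type*} [Fintype m] [Fintype n] (A : Matrix m n ℝ) :
    0 ≤ frobSq A := by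
  unfold frobSq; positivity

lemma frob_eq_sqrt {m n : Type*} [Fintype m] [Fintype n] (A : Matrix m n ℝ) :
    frob A = Real.sqrt (frobSq A) := rfl

lemma frob_nonneg {m n : Type*} [Fintype m] [Fintype n] (A : Matrix m n ℝ) :
    0 ≤ frob A := Real.sqrt_nonneg _

lemma frob_sq {m n : Type*} [Fintype m] [Fintype n] (A : Matrix m n ℝ) :
    frob A ^ 2 = frobSq A := Real.sq_sqrt (frobSq_nonneg A)

lemma frob_neg {m n : Type*} [Fintype m] [Fintype n] (A : Matrix m n ℝ) :
    frob (-A) = frob A := by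
  simp [frob, frobSq]

/-- The matrix-to-Euclidean-vector identification. -/
def toE {m n : Type*} [Fintype m] [Fintype n] (A : Matrix m n ℝ) :
    EuclideanSpace ℝ (m × n) :=
  (WithLp.equiv 2 _).symm (fun p => A p.1 p.2)

lemma norm_toE {m n : Type*} [Fintype m] [Fintype n] (A : Matrix m n ℝ) :
    ‖toE A‖ = frob A := by
  rw [EuclideanSpace.norm_eq, frob]
  congr 1
  rw [← Finset.sum_product']
  refine Finset.sum_congr rfl fun p _ => ?_
  simp [toE, sq_abs]

lemma toE_add {m n : Type*} [Fintype m] [Fintype n] (A B : Matrix m n ℝ) :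
    toE (A + B) = toE A + toE B := rfl

lemma frob_add_le {m n : Type*} [Fintype m] [Fintype n] (A B : Matrix m n ℝ) :
    frob (A + B) ≤ frob A + frob B := by
  rw [← norm_toE, ← norm_toE, ← norm_toE, toE_add]
  exact norm_add_le _ _

lemma frob_sub_le {m n : Type*} [Fintype m] [Fintype n] (A B : Matrix m n ℝ) :
    frob (A - B) ≤ frob A + frob B := by
  rw [sub_eq_add_neg]
  calc frob (A + -B) ≤ frob A + frob (-B) := frob_add_le _ _
  _ = frob A + frob B := by rw [frob_neg]

lemma frobSq_eq_trace {m n : Type*} [Fintype m] [Fintype n] (A : Matrix m n ℝ) :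
    frobSq A = Matrix.trace (Aᵀ * A) := by
  simp only [frobSq, Matrix.trace, Matrix.diag, Matrix.mul_apply, Matrix.transpose_apply]
  rw [Finset.sum_comm]
  simp [sq]

/-- Frobenius norm contracts under the orthogonal projection `1 - Q Qᵀ`. -/
lemma frobSq_proj_le {m n μ : Type*} [Fintype m] [Fintype n] [Fintype μ] [DecidableEq μ]
    (Q : Matrix m μ ℝ) (hQ : Qᵀ * Q = 1) (M : Matrix m n ℝ) :
    frobSq (M - Q * Qᵀ * M) ≤ frobSq M := by
  have key : frobSq (M - Q * Qᵀ * M) + frobSq (Qᵀ * M) = frobSq M := by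
    rw [frobSq_eq_trace, frobSq_eq_trace, frobSq_eq_trace]
    have h1 : (M - Q * Qᵀ * M)ᵀ * (M - Q * Qᵀ * M)
        = Mᵀ * M - Mᵀ * (Q * (Qᵀ * M)) := by
      have e1 : Mᵀ * (Q * (Qᵀ * (Q * (Qᵀ * M)))) = Mᵀ * (Q * (Qᵀ * M)) := by
        rw [← Matrix.mul_assoc Qᵀ Q, hQ, Matrix.one_mul]
      simp only [Matrix.transpose_sub, Matrix.transpose_mul, Matrix.transpose_transpose,
        Matrix.sub_mul, Matrix.mul_sub, Matrix.mul_assoc, e1]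
      abel
    have h2 : (Qᵀ * M)ᵀ * (Qᵀ * M) = Mᵀ * (Q * (Qᵀ * M)) := by
      simp only [Matrix.transpose_mul, Matrix.transpose_transpose, Matrix.mul_assoc]
    rw [h1, h2, Matrix.trace_sub]
    ring
  have h3 := frobSq_nonneg (Qᵀ * M)
  linarith

lemma frob_proj_le {m n μ : Type*} [Fintype m] [Fintype n] [Fintype μ] [DecidableEq μ]
    (Q : Matrix m μ ℝ) (hQ : Qᵀ * Q = 1) (M : Matrix m n ℝ) :
    frob (M - Q * Qᵀ * M) ≤ frob M := by
  rw [frob_eq_sqrt, frob_eq_sqrt]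
  exact Real.sqrt_le_sqrt (frobSq_proj_le Q hQ M)

lemma spec_nonneg {m n : Type*} [Fintype m] [Fintype n] [DecidableEq n]
    (A : Matrix m n ℝ) : 0 ≤ spec A := norm_nonneg _

lemma spec_transpose {m n : Type*} [Fintype m] [Fintype n] [DecidableEq m] [DecidableEq n]
    (A : Matrix m n ℝ) : spec Aᵀ = spec A := by
  have h : Aᵀ = Aᴴ := by
    ext i j; simp [Matrix.conjTranspose_apply]
  rw [spec, spec, h, Matrix.toEuclideanLin_conjTranspose_eq_adjoint,
    LinearMap.adjoint_toContinuousLinearMap]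
  exact ContinuousLinearMap.adjoint.norm_map _

lemma frobSq_mul_le {m k n : Type*} [Fintype m] [Fintype k] [Fintype n]
    [DecidableEq k] [DecidableEq n]
    (Y : Matrix m k ℝ) (F : Matrix k n ℝ) :
    frobSq (Y * F) ≤ spec F ^ 2 * frobSq Y := by
  have row_eq : ∀ i, ∑ j, ((Y * F) i j) ^ 2
      = ‖(LinearMap.toContinuousLinearMap (Matrix.toEuclideanLin Fᵀ))
          ((WithLp.equiv 2 (k → ℝ)).symm (Y i))‖ ^ 2 := by
    intro i
    rw [EuclideanSpace.norm_eq, Real.sq_sqrt (by positivity)]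
    refine Finset.sum_congr rfl fun j _ => ?_
    rw [Real.norm_eq_abs, sq_abs]
    congr 1
    simp [Matrix.toEuclideanLin_apply, Matrix.mulVec, Matrix.mul_apply, dotProduct,
      Matrix.transpose_apply, mul_comm]
  have row_norm : ∀ i, ‖(WithLp.equiv 2 (k → ℝ)).symm (Y i)‖ ^ 2 = ∑ j, (Y i j) ^ 2 := by
    intro i
    rw [EuclideanSpace.norm_eq, Real.sq_sqrt (by positivity)]
    exact Finset.sum_congr rfl fun j _ => by rw [Real.norm_eq_abs, sq_abs]; rfl
  unfold frobSq
  calc ∑ i, ∑ j, ((Y * F) i j) ^ 2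
      = ∑ i, ‖(LinearMap.toContinuousLinearMap (Matrix.toEuclideanLin Fᵀ))
          ((WithLp.equiv 2 (k → ℝ)).symm (Y i))‖ ^ 2 := by
        exact Finset.sum_congr rfl fun i _ => row_eq i
    _ ≤ ∑ i, (spec Fᵀ * ‖(WithLp.equiv 2 (k → ℝ)).symm (Y i)‖) ^ 2 := by
        refine Finset.sum_le_sum fun i _ => ?_
        have := ContinuousLinearMap.le_opNorm
          (LinearMap.toContinuousLinearMap (Matrix.toEuclideanLin Fᵀ))
          ((WithLp.equiv 2 (k → ℝ)).symm (Y i))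
        exact pow_le_pow_left₀ (norm_nonneg _) this 2
    _ = spec F ^ 2 * ∑ i, ∑ j, (Y i j) ^ 2 := by
        rw [Finset.mul_sum]
        refine Finset.sum_congr rfl fun i _ => ?_
        rw [mul_pow, spec_transpose, row_norm]

lemma frob_mul_le {m k n : Type*} [Fintype m] [Fintype k] [Fintype n]
    [DecidableEq k] [DecidableEq n]
    (Y : Matrix m k ℝ) (F : Matrix k n ℝ) :
    frob (Y * F) ≤ spec F * frob Y := by
  rw [frob_eq_sqrt, frob_eq_sqrt]
  calc Real.sqrt (frobSq (Y * F)) ≤ Real.sqrt (spec F ^ 2 * frobSq Y) :=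
        Real.sqrt_le_sqrt (frobSq_mul_le Y F)
    _ = spec F * Real.sqrt (frobSq Y) := by
        rw [Real.sqrt_mul (by positivity), Real.sqrt_sq (spec_nonneg F)]

end FrobAux

open FrobAux in
/-- Structural bound, `q = 1` version for sampled Gram matrices. -/
theorem stmt10 {I T μ K : ℕ}
    (C : Matrix (Fin I) (Fin T) ℝ) (Q : Matrix (Fin I) (Fin μ) ℝ) (hQ : Qᵀ * Q = 1)
    (R : Matrix (Fin μ) (Fin (μ + K)) ℝ) (F : Matrix (Fin (μ + K)) (Fin I) ℝ)
    (G : Matrix (Fin I) (Fin (μ + K)) ℝ) :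
    frob (C * Cᵀ - Q * Qᵀ * (C * Cᵀ)) ^ 2 ≤
      2 * frob (C * Cᵀ * G * F - C * Cᵀ) ^ 2 +
        2 * spec F ^ 2 * frob (Q * R - C * Cᵀ * G) ^ 2 := by
  set B := C * Cᵀ with hB
  set A1 : Matrix (Fin I) (Fin I) ℝ := B - B * G * F with hA1
  set A2 : Matrix (Fin I) (Fin I) ℝ := (Q * R - B * G) * F with hA2
  have key : B - Q * Qᵀ * B = (A1 - Q * Qᵀ * A1) - (A2 - Q * Qᵀ * A2) := by
    have e1 : Q * (Qᵀ * (Q * (R * F))) = Q * (R * F) := by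
      rw [← Matrix.mul_assoc Qᵀ Q, hQ, Matrix.one_mul]
    simp only [hA1, hA2, Matrix.sub_mul, Matrix.mul_sub, Matrix.mul_assoc, e1]
    abel
  have hproj1 : frob (A1 - Q * Qᵀ * A1) ≤ frob A1 := frob_proj_le Q hQ A1
  have hproj2 : frob (A2 - Q * Qᵀ * A2) ≤ frob A2 := frob_proj_le Q hQ A2
  have hA2le : frob A2 ≤ spec F * frob (Q * R - B * G) := frob_mul_le _ F
  have hA1eq : frob A1 = frob (B * G * F - B) := by
    rw [← frob_neg (B * G * F - B), neg_sub]
  have htri : frob (B - Q * Qᵀ * B) ≤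
      frob (A1 - Q * Qᵀ * A1) + frob (A2 - Q * Qᵀ * A2) := by
    rw [key]; exact frob_sub_le _ _
  have hb : frob (B - Q * Qᵀ * B) ≤
      frob (B * G * F - B) + spec F * frob (Q * R - B * G) := by
    calc frob (B - Q * Qᵀ * B) ≤ frob (A1 - Q * Qᵀ * A1) + frob (A2 - Q * Qᵀ * A2) := htri
      _ ≤ frob A1 + frob A2 := add_le_add hproj1 hproj2
      _ ≤ frob (B * G * F - B) + spec F * frob (Q * R - B * G) := by
          rw [hA1eq] at *; exact add_le_add le_rfl hA2le
  have h0 : 0 ≤ frob (B - Q * Qᵀ * B) := frob_nonneg _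
  nlinarith [frob_nonneg (B * G * F - B), frob_nonneg (Q * R - B * G), spec_nonneg F,
    mul_nonneg (spec_nonneg F) (frob_nonneg (Q * R - B * G)),
    sq_nonneg (frob (B * G * F - B) - spec F * frob (Q * R - B * G))]

end
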